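/- Let α > 0, let n ≥ 2 be an integer, and let x ∈ (0,1). On a probability space let E_1,…,E_n, G*, U_1,…,U_n be jointly independent with E_i ~ Gamma(1,1) (standard exponential), G* ~ Gamma(α, 1), and U_i ~ Uniform(0,1). Set T = G* + Σ_{j=1}^n E_j, w_i = E_i/T, and u_i = w_i·U_i. Then P( min_{1≤i≤n} u_i ≤ x ) ≤ n·(α + n − 1)·x·(1 + log(1/x)). -/

import Mathlib

open MeasureTheory ProbabilityTheory

section Helpers
open Real Set


lemma measurable_gammaPDF (a r : ℝ) : Measurable (gammaPDF a r) :=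
  (measurable_gammaPDFReal a r).ennreal_ofReal

lemma gammaMeasure_Iic_nonpos {a r c : ℝ} (hc : c ≤ 0) : gammaMeasure a r (Set.Iic c) = 0 := by
  rw [gammaMeasure, withDensity_apply _ measurableSet_Iic]
  have hsub : Set.Iic c ⊆ Set.Iic (0:ℝ) := Iic_subset_Iic.mpr hc
  have h0 : ∫⁻ y in Set.Iic (0:ℝ), gammaPDF a r y ∂volume = 0 := by
    have heq : ∫⁻ y in Set.Iic (0:ℝ), gammaPDF a r y ∂volume
        = ∫⁻ y in Set.Iio (0:ℝ), gammaPDF a r y ∂volume :=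
      (setLIntegral_congr Iio_ae_eq_Iic).symm
    rw [heq, setLIntegral_congr_fun measurableSet_Iio
      (fun y (hy : y ∈ Set.Iio 0) => gammaPDF_of_neg hy)]
    simp
  exact le_antisymm (le_trans (lintegral_mono_set hsub) h0.le) (by simp)

lemma gamma_exp_lintegral {a t : ℝ} (ha : 0 < a) (ht : 0 ≤ t) :
    ∫⁻ y, ENNReal.ofReal (Real.exp (-(t * y))) ∂(gammaMeasure a 1)
      = ENNReal.ofReal ((1 + t) ^ (-a)) := by
  have h1t : (0:ℝ) < 1 + t := by linarith
  rw [gammaMeasure, lintegral_withDensity_eq_lintegral_mul _ (measurable_gammaPDF a 1)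
    (by fun_prop)]
  have key : ∀ y : ℝ, gammaPDF a 1 y * ENNReal.ofReal (Real.exp (-(t * y)))
      = ENNReal.ofReal ((1 + t) ^ (-a)) * gammaPDF a (1 + t) y := by
    intro y
    rcases lt_or_ge y 0 with hy | hy
    · rw [gammaPDF_of_neg hy, gammaPDF_of_neg hy, zero_mul, mul_zero]
    · rw [gammaPDF_of_nonneg hy, gammaPDF_of_nonneg hy,
        ← ENNReal.ofReal_mul (by positivity), ← ENNReal.ofReal_mul (by positivity)]
      congr 1
      rw [one_rpow]
      have hexp : Real.exp (-(1 * y)) * Real.exp (-(t * y)) = Real.exp (-((1+t) * y)) := by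
        rw [← Real.exp_add]; ring_nf
      have hpow : (1+t) ^ (-a) * (1+t) ^ a = 1 := by
        rw [← Real.rpow_add h1t]; simp
      calc (1 / Real.Gamma a * y ^ (a-1) * Real.exp (-(1*y))) * Real.exp (-(t*y))
          = 1 / Real.Gamma a * y ^ (a-1) * (Real.exp (-(1*y)) * Real.exp (-(t*y))) := by ring
        _ = 1 / Real.Gamma a * y ^ (a-1) * Real.exp (-((1+t)*y)) := by rw [hexp]
        _ = ((1+t) ^ (-a) * (1+t) ^ a) * (1 / Real.Gamma a * y ^ (a-1)
              * Real.exp (-((1+t)*y))) := by rw [hpow]; ring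
        _ = (1+t) ^ (-a) * ((1+t) ^ a / Real.Gamma a * y ^ (a-1)
              * Real.exp (-((1+t)*y))) := by ring
  simp_rw [Pi.mul_apply, key]
  rw [lintegral_const_mul _ (measurable_gammaPDF a (1+t)), lintegral_gammaPDF_eq_one ha h1t,
    mul_one]

lemma exp_Iic (c : ℝ) : gammaMeasure 1 1 (Set.Iic c) = ENNReal.ofReal (1 - Real.exp (-c)) := by
  rcases le_or_gt c 0 with hc | hc
  · rw [gammaMeasure_Iic_nonpos hc]
    symm
    rw [ENNReal.ofReal_eq_zero]
    have := Real.one_le_exp (by linarith : (0:ℝ) ≤ -c)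
    linarith
  · have : IsProbabilityMeasure (gammaMeasure 1 1) := isProbabilityMeasure_gammaMeasure one_pos one_pos
    have h := ProbabilityTheory.ofReal_cdf (μ := gammaMeasure 1 1) c
    have h2 : ProbabilityTheory.cdf (gammaMeasure 1 1) c = 1 - Real.exp (-c) := by
      have := ProbabilityTheory.cdf_expMeasure_eq one_pos c
      rw [ProbabilityTheory.expMeasure] at this
      rw [this, if_pos hc.le, one_mul]
    rw [← h, h2]

lemma bern_ineq {t β : ℝ} (ht : 0 < t) (hβ : 1 ≤ β) :
    1 - (1+t) ^ (-β) ≤ β * (t / (1+t)) := by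
  have h1t : (0:ℝ) < 1 + t := by linarith
  set y : ℝ := (1+t)⁻¹ with hy
  have hy0 : 0 < y := by positivity
  have hy1 : y ≤ 1 := by
    rw [hy]; rw [inv_le_one_iff₀]; right; linarith
  have hpow : (1+t) ^ (-β) = y ^ β := by
    rw [hy, Real.inv_rpow h1t.le, ← Real.rpow_neg h1t.le]
  have hb := one_add_mul_self_le_rpow_one_add (s := y - 1) (by linarith) hβ
  have h1 : (1 : ℝ) + (y - 1) = y := by ring
  rw [h1] at hb
  have hty : t / (1+t) = 1 - y := by
    rw [hy]; field_simp; ring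
  rw [hpow, hty]
  nlinarith

lemma lintegral_prod_of_iIndepFun {Ω ι : Type*} [MeasurableSpace Ω] {μ : Measure Ω}
    [IsProbabilityMeasure μ] {g : ι → Ω → ENNReal} (hg : ∀ k, Measurable (g k))
    (h : iIndepFun g μ) (s : Finset ι) :
    ∫⁻ ω, ∏ k ∈ s, g k ω ∂μ = ∏ k ∈ s, ∫⁻ ω, g k ω ∂μ := by
  classical
  induction s using Finset.induction_on with
  | empty => simp
  | @insert j s hj ih =>
    have hindep : IndepFun (∏ k ∈ s, g k) (g j) μ :=
      h.indepFun_finsetProd_of_notMem hg hj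
    have hprod : ∀ ω, ∏ k ∈ insert j s, g k ω = (∏ k ∈ s, g k ω) * g j ω := by
      intro ω; rw [Finset.prod_insert hj, mul_comm]
    simp_rw [hprod]
    rw [lintegral_mul_eq_lintegral_mul_lintegral_of_indepFun''
      (by exact (Finset.measurable_prod s fun k _ => hg k).aemeasurable)
      ((hg j).aemeasurable) (by convert hindep using 1; funext ω; simp [Finset.prod_apply]),
      ih, Finset.prod_insert hj, mul_comm]

lemma key_bound {Ω : Type*} [MeasurableSpace Ω] (P : Measure Ω) [IsProbabilityMeasure P]
    {x β : ℝ} (hx0 : 0 < x) (hx1 : x < 1) (hβ : 1 ≤ β)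
    (A V B : Ω → ℝ) (hA : Measurable A) (hV : Measurable V) (hB : Measurable B)
    (hmap : Measure.map (fun ω => ((V ω, B ω), A ω)) P
      = ((volume.restrict (Set.Ioo (0:ℝ) 1)).prod (Measure.map B P)).prod (gammaMeasure 1 1))
    (hpos : ∀ᵐ b ∂(Measure.map B P), 0 ≤ b)
    (hL : ∀ t : ℝ, 0 < t →
      ∫⁻ ω, ENNReal.ofReal (Real.exp (-(t * B ω))) ∂P = ENNReal.ofReal ((1+t) ^ (-β))) :
    P {ω | A ω * (V ω - x) ≤ x * B ω} ≤ ENNReal.ofReal (x + β * x * Real.log (1/x)) := by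
  classical
  set ν : Measure ℝ := volume.restrict (Set.Ioo (0:ℝ) 1) with hν
  set ρ : Measure ℝ := Measure.map B P with hρ
  have instρ : IsProbabilityMeasure ρ := Measure.isProbabilityMeasure_map hB.aemeasurable
  have instμ : IsProbabilityMeasure (gammaMeasure 1 1) :=
    isProbabilityMeasure_gammaMeasure one_pos one_pos
  set C : Set ((ℝ × ℝ) × ℝ) := {p | p.2 * (p.1.1 - x) ≤ x * p.1.2} with hCdef
  have hC : MeasurableSet C := measurableSet_le (by fun_prop) (by fun_prop)
  have hev : {ω | A ω * (V ω - x) ≤ x * B ω} = (fun ω => ((V ω, B ω), A ω)) ⁻¹' C := rfl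
  rw [hev, ← Measure.map_apply (by fun_prop) hC, hmap, Measure.prod_apply hC]
  have hslice : ∀ q : ℝ × ℝ, Prod.mk q ⁻¹' C = {a : ℝ | a * (q.1 - x) ≤ x * q.2} := fun q => rfl
  -- inner bound function
  set h : ℝ → ENNReal := fun v => if v ≤ x then 1 else ENNReal.ofReal (β * x / v) with hh
  have hmeas_slice : Measurable fun q : ℝ × ℝ => gammaMeasure 1 1 (Prod.mk q ⁻¹' C) :=
    measurable_measure_prodMk_left hC
  rw [lintegral_prod _ hmeas_slice.aemeasurable]
  have hinner : ∀ v : ℝ,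
      (∫⁻ b, gammaMeasure 1 1 (Prod.mk (v, b) ⁻¹' C) ∂ρ) ≤ h v := by
    intro v
    by_cases hvx : v ≤ x
    · rw [hh]; simp only [if_pos hvx]
      calc ∫⁻ b, gammaMeasure 1 1 (Prod.mk (v, b) ⁻¹' C) ∂ρ
          ≤ ∫⁻ _, 1 ∂ρ := lintegral_mono fun b => prob_le_one
        _ = 1 := by simp
    · push_neg at hvx
      have hvx' : 0 < v - x := by linarith
      have hv0 : 0 < v := lt_trans hx0 hvx
      set t : ℝ := x / (v - x) with htdef
      have ht : 0 < t := div_pos hx0 hvx'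
      have hset : ∀ b : ℝ, Prod.mk (v, b) ⁻¹' C = Set.Iic (t * b) := by
        intro b
        ext a
        simp only [hslice, Set.mem_setOf_eq, Set.mem_Iic]
        rw [htdef, div_mul_eq_mul_div, mul_comm x b, ← le_div_iff₀ hvx', mul_comm b x]
      have hval : ∀ b : ℝ, gammaMeasure 1 1 (Prod.mk (v, b) ⁻¹' C)
          = 1 - ENNReal.ofReal (Real.exp (-(t * b))) := by
        intro b
        rw [hset b, exp_Iic, ENNReal.ofReal_sub _ (Real.exp_pos _).le, ENNReal.ofReal_one]
      simp_rw [hval]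
      have hfin : ∫⁻ b, ENNReal.ofReal (Real.exp (-(t * b))) ∂ρ
          = ENNReal.ofReal ((1+t) ^ (-β)) := by
        rw [hρ, lintegral_map (by fun_prop) hB]
        exact hL t ht
      rw [lintegral_sub (by fun_prop) (by rw [hfin]; exact ENNReal.ofReal_ne_top)
        (by filter_upwards [hpos] with b hb
            refine ENNReal.ofReal_le_one.mpr (Real.exp_le_one_iff.mpr ?_)
            simp only [Left.neg_nonpos_iff]
            positivity)]
      rw [hfin, lintegral_one, measure_univ]
      have h1 : (1 : ENNReal) - ENNReal.ofReal ((1+t) ^ (-β))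
          = ENNReal.ofReal (1 - (1+t) ^ (-β)) := by
        rw [ENNReal.ofReal_sub _ (Real.rpow_nonneg (by linarith) _), ENNReal.ofReal_one]
      rw [h1, hh]
      simp only [if_neg (not_le.mpr hvx)]
      apply ENNReal.ofReal_le_ofReal
      have hb := bern_ineq ht hβ
      have htt : t / (1 + t) = x / v := by
        rw [htdef]
        field_simp
        ring
      rw [htt] at hb
      calc 1 - (1+t) ^ (-β) ≤ β * (x / v) := hb
        _ = β * x / v := by ring
  calc ∫⁻ v, (∫⁻ b, gammaMeasure 1 1 (Prod.mk (v, b) ⁻¹' C) ∂ρ) ∂ν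
      ≤ ∫⁻ v, h v ∂ν := lintegral_mono hinner
    _ ≤ ENNReal.ofReal (x + β * x * Real.log (1/x)) := by
      have hsplit : Set.Ioo (0:ℝ) 1 = Set.Ioc 0 x ∪ Set.Ioo x 1 :=
        (Set.Ioc_union_Ioo_eq_Ioo hx0.le hx1).symm
      have hlog0 : 0 ≤ Real.log (1/x) := Real.log_nonneg (one_le_one_div hx0 hx1.le)
      rw [hν, hsplit, lintegral_union measurableSet_Ioo (by
        rw [Set.disjoint_left]
        rintro v ⟨_, h2⟩ ⟨h3, _⟩
        exact absurd h3 (not_lt.mpr h2))]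
      have hpart1 : ∫⁻ v in Set.Ioc (0:ℝ) x, h v ∂volume = ENNReal.ofReal x := by
        have h1eq : ∫⁻ v in Set.Ioc (0:ℝ) x, h v ∂volume
            = ∫⁻ _ in Set.Ioc (0:ℝ) x, 1 ∂volume :=
          setLIntegral_congr_fun measurableSet_Ioc (fun v (hv : v ∈ Set.Ioc (0:ℝ) x) => if_pos hv.2)
        rw [h1eq]
        simp [Real.volume_Ioc]
      have hpart2 : ∫⁻ v in Set.Ioo x 1, h v ∂volume
          = ENNReal.ofReal (β * x) * ENNReal.ofReal (Real.log (1/x)) := by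
        have hcong : ∀ v ∈ Set.Ioo x 1, h v
            = ENNReal.ofReal (β * x) * ENNReal.ofReal v⁻¹ := by
          intro v hv
          rw [hh]
          simp only [if_neg (not_le.mpr hv.1)]
          rw [← ENNReal.ofReal_mul (by positivity), div_eq_mul_inv]
        rw [setLIntegral_congr_fun measurableSet_Ioo hcong,
          lintegral_const_mul _ measurable_inv.ennreal_ofReal]
        congr 1
        have hint : IntegrableOn (fun v : ℝ => v⁻¹) (Set.Ioo x 1) volume := by
          refine ((continuousOn_inv₀.mono ?_).integrableOn_Icc).mono_set Set.Ioo_subset_Icc_self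
          intro v hv
          exact ne_of_gt (lt_of_lt_of_le hx0 hv.1)
        rw [← ofReal_integral_eq_lintegral_ofReal hint
          (by filter_upwards [ae_restrict_mem measurableSet_Ioo] with v hv
              have : (0:ℝ) < v := lt_trans hx0 hv.1
              positivity)]
        congr 1
        rw [← integral_Ioc_eq_integral_Ioo, ← intervalIntegral.integral_of_le hx1.le]
        exact integral_inv_of_pos hx0 one_pos
      rw [hpart1, hpart2, ← ENNReal.ofReal_mul (by positivity), ← ENNReal.ofReal_add hx0.le
        (by positivity)]

end Helpers

section Main
open Real Set

/-- Lower-tail bound on the minimum slice variable under the singleton partition: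
with `E_1, …, E_n ~ Gamma(1,1)`, `G* ~ Gamma(α,1)`, `U_1, …, U_n ~ Uniform(0,1)`
jointly independent, `T = G* + Σ_j E_j`, `w_i = E_i/T`, `u_i = w_i U_i`:
`P(min_i u_i ≤ x) ≤ n (α + n − 1) x (1 + log(1/x))`. -/
theorem stmt14 {Ω : Type*} [MeasurableSpace Ω] (P : Measure Ω) [IsProbabilityMeasure P]
    (α : ℝ) (hα : 0 < α) (n : ℕ) (hn : 2 ≤ n) (x : ℝ) (hx : x ∈ Set.Ioo (0:ℝ) 1)
    (E : Fin n → Ω → ℝ) (Gstar : Ω → ℝ) (U : Fin n → Ω → ℝ)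
    (hEm : ∀ i, Measurable (E i)) (hGsm : Measurable Gstar)
    (hUm : ∀ i, Measurable (U i))
    (hindep : iIndepFun
      (fun j : Option (Fin n) ⊕ Fin n =>
        Sum.elim (fun o : Option (Fin n) => Option.elim o Gstar E) U j) P)
    (hEd : ∀ i, Measure.map (E i) P = gammaMeasure 1 1)
    (hGsd : Measure.map Gstar P = gammaMeasure α 1)
    (hUd : ∀ i, Measure.map (U i) P = volume.restrict (Set.Ioo (0:ℝ) 1)) :
    P {ω | (⨅ i, (E i ω / (Gstar ω + ∑ j, E j ω)) * U i ω) ≤ x}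
      ≤ ENNReal.ofReal ((n : ℝ) * (α + n - 1) * x * (1 + Real.log (1 / x))) := by
  classical
  obtain ⟨hx0, hx1⟩ := hx
  haveI : Nonempty (Fin n) := Fin.pos_iff_nonempty.mp (by omega)
  set f : Option (Fin n) ⊕ Fin n → Ω → ℝ :=
    fun j => Sum.elim (fun o : Option (Fin n) => Option.elim o Gstar E) U j with hf
  have hfm : ∀ k, Measurable (f k) := by
    rintro (o | j)
    · rcases o with _ | j
      · exact hGsm
      · exact hEm j
    · exact hUm j
  set β : ℝ := α + (n : ℝ) - 1 with hβdef
  have hβ1 : 1 ≤ β := by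
    have : (2:ℝ) ≤ (n:ℝ) := by exact_mod_cast hn
    simp only [hβdef]; linarith
  set Bi : Fin n → Ω → ℝ := fun i ω => Gstar ω + ∑ j ∈ Finset.univ.erase i, E j ω with hBi
  have hBim : ∀ i, Measurable (Bi i) :=
    fun i => hGsm.add (Finset.measurable_sum _ fun j _ => hEm j)
  set Si : Fin n → Set Ω := fun i => {ω | E i ω * (U i ω - x) ≤ x * Bi i ω} with hSi
  -- a.e. positivity
  have haeE : ∀ j, ∀ᵐ ω ∂P, 0 < E j ω := by
    intro j
    rw [ae_iff]
    have hset : {ω | ¬ 0 < E j ω} = E j ⁻¹' Set.Iic 0 := by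
      ext ω; simp [not_lt]
    rw [hset, ← Measure.map_apply (hEm j) measurableSet_Iic, hEd j,
      gammaMeasure_Iic_nonpos le_rfl]
  have haeG : ∀ᵐ ω ∂P, 0 < Gstar ω := by
    rw [ae_iff]
    have hset : {ω | ¬ 0 < Gstar ω} = Gstar ⁻¹' Set.Iic 0 := by
      ext ω; simp [not_lt]
    rw [hset, ← Measure.map_apply hGsm measurableSet_Iic, hGsd,
      gammaMeasure_Iic_nonpos le_rfl]
  have haeU : ∀ j, ∀ᵐ ω ∂P, U j ω ∈ Set.Ioo (0:ℝ) 1 := by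
    intro j
    rw [ae_iff]
    have hset : {ω | ¬ U j ω ∈ Set.Ioo (0:ℝ) 1} = U j ⁻¹' (Set.Ioo (0:ℝ) 1)ᶜ := by
      ext ω; simp
    rw [hset, ← Measure.map_apply (hUm j) measurableSet_Ioo.compl, hUd j,
      Measure.restrict_apply measurableSet_Ioo.compl, compl_inter_self, measure_empty]
  -- step 1: inclusion into the union
  have hstep1 : P {ω | (⨅ i, (E i ω / (Gstar ω + ∑ j, E j ω)) * U i ω) ≤ x}
      ≤ P (⋃ i, Si i) := by
    refine measure_mono_ae ?_
    filter_upwards [ae_all_iff.mpr haeE, haeG] with ω hE hG hinf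
    set T : ℝ := Gstar ω + ∑ j, E j ω with hT
    have hT0 : 0 < T := by
      refine add_pos hG (Finset.sum_pos (fun j _ => hE j) Finset.univ_nonempty)
    obtain ⟨i, hi⟩ := exists_eq_ciInf_of_finite
      (f := fun i => (E i ω / T) * U i ω)
    have hle : (E i ω / T) * U i ω ≤ x := by rw [hi]; exact hinf
    have hle2 : E i ω * U i ω ≤ x * T := by
      rw [div_mul_eq_mul_div] at hle
      exact (div_le_iff₀ hT0).mp hle
    have hsum : T = E i ω + Bi i ω := by
      rw [hBi, hT]
      have := Finset.add_sum_erase Finset.univ (fun j => E j ω) (Finset.mem_univ i)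
      simp only at this ⊢
      linarith
    refine Set.mem_iUnion.mpr ⟨i, ?_⟩
    simp only [hSi, Set.mem_setOf_eq]
    have hms : E i ω * (U i ω - x) = E i ω * U i ω - E i ω * x := by ring
    nlinarith [hle2, hsum]
  -- step 2: per-index bound
  have hstep2 : ∀ i, P (Si i) ≤ ENNReal.ofReal (x + β * x * Real.log (1/x)) := by
    intro i
    -- index sets
    set sB : Finset (Option (Fin n) ⊕ Fin n) :=
      insert (Sum.inl none) ((Finset.univ.erase i).image (fun j => Sum.inl (some j))) with hsB
    have hinrB : (Sum.inr i : Option (Fin n) ⊕ Fin n) ∉ sB := by simp [hsB]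
    have hinlnone : (Sum.inl none : Option (Fin n) ⊕ Fin n)
        ∉ (Finset.univ.erase i).image (fun j => Sum.inl (some j)) := by simp
    have hBsum : ∀ ω, Bi i ω = ∑ k ∈ sB, f k ω := by
      intro ω
      rw [hsB, Finset.sum_insert hinlnone,
        Finset.sum_image (fun a _ b _ h => by simpa using h)]
      rfl
    -- independence of (U i, Bi i) from E i
    set S : Finset (Option (Fin n) ⊕ Fin n) := insert (Sum.inr i) sB with hS
    set T : Finset (Option (Fin n) ⊕ Fin n) := {Sum.inl (some i)} with hTdef
    have hST : Disjoint S T := by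
      rw [hTdef, Finset.disjoint_singleton_right]
      simp only [hS, hsB, Finset.mem_insert, Finset.mem_image, Finset.mem_erase]
      push_neg
      refine ⟨by simp, by simp, ?_⟩
      rintro j ⟨hj, -⟩
      simp [hj]
    have base := hindep.indepFun_finset S T hST hfm
    have hφ : Measurable (fun v : (k : S) → ℝ =>
        ((v ⟨Sum.inr i, Finset.mem_insert_self _ _⟩ : ℝ),
          ∑ k ∈ sB.attach, v ⟨k.1, Finset.mem_insert_of_mem k.2⟩)) :=
      Measurable.prodMk (measurable_pi_apply _)
        (Finset.measurable_sum _ fun k _ => measurable_pi_apply _)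
    have hψ : Measurable (fun v : (k : T) → ℝ =>
        (v ⟨Sum.inl (some i), Finset.mem_singleton_self _⟩ : ℝ)) := measurable_pi_apply _
    have indepVB_A : IndepFun (fun ω => (U i ω, Bi i ω)) (E i) P := by
      have h2 := base.comp hφ hψ
      have heq1 : ((fun v : (k : S) → ℝ =>
          ((v ⟨Sum.inr i, Finset.mem_insert_self _ _⟩ : ℝ),
            ∑ k ∈ sB.attach, v ⟨k.1, Finset.mem_insert_of_mem k.2⟩))
          ∘ (fun a (k : S) => f k a)) = fun ω => (U i ω, Bi i ω) := by
        funext ω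
        simp only [Function.comp_apply]
        refine Prod.ext rfl ?_
        simp only
        rw [hBsum ω, ← Finset.sum_attach sB (fun k => f k ω)]
      have heq2 : ((fun v : (k : T) → ℝ =>
          (v ⟨Sum.inl (some i), Finset.mem_singleton_self _⟩ : ℝ))
          ∘ (fun a (k : T) => f k a)) = E i := rfl
      rwa [heq1, heq2] at h2
    have indepV_B : IndepFun (U i) (Bi i) P := by
      have h3 := (hindep.indepFun_finsetSum_of_notMem hfm hinrB).symm
      have heq3 : (∑ k ∈ sB, f k) = Bi i := by
        funext ω
        rw [Finset.sum_apply, ← hBsum ω]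
      rwa [heq3] at h3
    have hmapVB : Measure.map (fun ω => (U i ω, Bi i ω)) P
        = (volume.restrict (Set.Ioo (0:ℝ) 1)).prod (Measure.map (Bi i) P) := by
      rw [(indepFun_iff_map_prod_eq_prod_map_map (hUm i).aemeasurable
        (hBim i).aemeasurable).mp indepV_B, hUd i]
    have hmap : Measure.map (fun ω => ((U i ω, Bi i ω), E i ω)) P
        = ((volume.restrict (Set.Ioo (0:ℝ) 1)).prod (Measure.map (Bi i) P)).prod
          (gammaMeasure 1 1) := by
      rw [(indepFun_iff_map_prod_eq_prod_map_map
        ((hUm i).prodMk (hBim i)).aemeasurable (hEm i).aemeasurable).mp indepVB_A,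
        hmapVB, hEd i]
    have hpos : ∀ᵐ b ∂(Measure.map (Bi i) P), 0 ≤ b := by
      rw [ae_map_iff (hBim i).aemeasurable measurableSet_Ici]
      filter_upwards [ae_all_iff.mpr haeE, haeG] with ω hE hG
      have : (0:ℝ) ≤ ∑ j ∈ Finset.univ.erase i, E j ω :=
        Finset.sum_nonneg fun j _ => (hE j).le
      simp only [hBi, Set.mem_Ici]
      linarith
    have hL : ∀ t : ℝ, 0 < t →
        ∫⁻ ω, ENNReal.ofReal (Real.exp (-(t * Bi i ω))) ∂P
          = ENNReal.ofReal ((1+t) ^ (-β)) := by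
      intro t ht
      have h1t : (0:ℝ) < 1 + t := by linarith
      set g : Option (Fin n) ⊕ Fin n → Ω → ENNReal :=
        fun k ω => ENNReal.ofReal (Real.exp (-(t * f k ω))) with hg
      have hgm : ∀ k, Measurable (g k) := fun k => by
        exact ((hfm k).const_mul t).neg.exp.ennreal_ofReal
      have hgindep : iIndepFun g P := by
        have := hindep.comp (fun _ => fun y : ℝ => ENNReal.ofReal (Real.exp (-(t*y))))
          (fun _ => by fun_prop)
        exact this
      have hprod : ∀ ω, ENNReal.ofReal (Real.exp (-(t * Bi i ω))) = ∏ k ∈ sB, g k ω := by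
        intro ω
        rw [hBsum ω, Finset.mul_sum, ← Finset.sum_neg_distrib, Real.exp_sum,
          ENNReal.ofReal_prod_of_nonneg (fun k _ => (Real.exp_pos _).le)]
      simp_rw [hprod]
      rw [lintegral_prod_of_iIndepFun hgm hgindep]
      have hfac1 : ∫⁻ ω, g (Sum.inl none) ω ∂P = ENNReal.ofReal ((1+t) ^ (-α)) := by
        show ∫⁻ ω, ENNReal.ofReal (Real.exp (-(t * Gstar ω))) ∂P = _
        have heq : ∫⁻ ω, ENNReal.ofReal (Real.exp (-(t * Gstar ω))) ∂P
            = ∫⁻ y, ENNReal.ofReal (Real.exp (-(t * y))) ∂(Measure.map Gstar P) :=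
          (lintegral_map (f := fun y : ℝ => ENNReal.ofReal (Real.exp (-(t * y))))
            (by fun_prop) hGsm).symm
        rw [heq, hGsd]
        exact gamma_exp_lintegral hα ht.le
      have hfac2 : ∀ j : Fin n, ∫⁻ ω, g (Sum.inl (some j)) ω ∂P
          = ENNReal.ofReal ((1+t) ^ (-(1:ℝ))) := by
        intro j
        show ∫⁻ ω, ENNReal.ofReal (Real.exp (-(t * E j ω))) ∂P = _
        have heq : ∫⁻ ω, ENNReal.ofReal (Real.exp (-(t * E j ω))) ∂P
            = ∫⁻ y, ENNReal.ofReal (Real.exp (-(t * y))) ∂(Measure.map (E j) P) :=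
          (lintegral_map (f := fun y : ℝ => ENNReal.ofReal (Real.exp (-(t * y))))
            (by fun_prop) (hEm j)).symm
        rw [heq, hEd j]
        exact gamma_exp_lintegral one_pos ht.le
      rw [hsB, Finset.prod_insert hinlnone,
        Finset.prod_image (fun a _ b _ h => by simpa using h), hfac1]
      simp_rw [hfac2]
      rw [Finset.prod_const, Finset.card_erase_of_mem (Finset.mem_univ i),
        Finset.card_univ, Fintype.card_fin, ← ENNReal.ofReal_pow
          (Real.rpow_nonneg h1t.le _), ← ENNReal.ofReal_mul
          (Real.rpow_nonneg h1t.le _)]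
      congr 1
      rw [← Real.rpow_natCast ((1+t) ^ (-(1:ℝ))) (n-1), ← Real.rpow_mul h1t.le,
        ← Real.rpow_add h1t]
      congr 1
      have hc : ((n - 1 : ℕ) : ℝ) = (n:ℝ) - 1 := by
        have : 1 ≤ n := by omega
        push_cast [this]
        ring
      rw [hc, hβdef]
      ring
    exact key_bound P hx0 hx1 hβ1 (E i) (U i) (Bi i) (hEm i) (hUm i) (hBim i)
      hmap hpos hL
  -- assembly
  have hlog0 : 0 ≤ Real.log (1/x) := Real.log_nonneg (one_le_one_div hx0 hx1.le)
  calc P {ω | (⨅ i, (E i ω / (Gstar ω + ∑ j, E j ω)) * U i ω) ≤ x}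
      ≤ P (⋃ i, Si i) := hstep1
    _ ≤ ∑' i, P (Si i) := measure_iUnion_le _
    _ = ∑ i, P (Si i) := tsum_fintype _
    _ ≤ ∑ _i : Fin n, ENNReal.ofReal (x + β * x * Real.log (1/x)) :=
        Finset.sum_le_sum fun i _ => hstep2 i
    _ = n * ENNReal.ofReal (x + β * x * Real.log (1/x)) := by
        rw [Finset.sum_const, Finset.card_univ, Fintype.card_fin, nsmul_eq_mul]
    _ ≤ ENNReal.ofReal ((n : ℝ) * (α + n - 1) * x * (1 + Real.log (1 / x))) := by
        rw [← ENNReal.ofReal_natCast n, ← ENNReal.ofReal_mul (by positivity)]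
        apply ENNReal.ofReal_le_ofReal
        have hβx : x + β * x * Real.log (1/x) ≤ β * x * (1 + Real.log (1/x)) := by
          nlinarith
        calc (n:ℝ) * (x + β * x * Real.log (1/x)) ≤ (n:ℝ) * (β * x * (1 + Real.log (1/x))) := by
              apply mul_le_mul_of_nonneg_left hβx (by positivity)
          _ = (n : ℝ) * (α + n - 1) * x * (1 + Real.log (1 / x)) := by rw [hβdef]; ring

end Main
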